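/- Let G = K_n − e where e = xy is a deleted edge, n ≥ 4. A set A of vertices is a center set of G if and only if A is a singleton, V \ {x}, V \ {y}, V \ {x,y}, or V. -/

import Mathlib

/-- The `S`-eccentricity of a vertex `v`. -/
noncomputable def sEcc {V : Type*} (G : SimpleGraph V) (S : Finset V) (v : V) : ℕ :=
  S.sup fun x => G.dist v x

/-- The `S`-center of `G`. -/
noncomputable def sCenter {V : Type*} (G : SimpleGraph V) (S : Finset V) : Set V :=
  {v | ∀ w, sEcc G S v ≤ sEcc G S w}

/-- `A` is a center set of `G` if it is the `S`-center for some nonempty set `S`. -/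
def IsCenterSet {V : Type*} (G : SimpleGraph V) (A : Set V) : Prop :=
  ∃ S : Finset V, S.Nonempty ∧ sCenter G S = A

section
variable {n : ℕ} (x y : Fin n)

lemma kne_adj (u v : Fin n) :
    ((⊤ : SimpleGraph (Fin n)).deleteEdges {s(x, y)}).Adj u v ↔ u ≠ v ∧ s(u, v) ≠ s(x, y) := by
  simp [SimpleGraph.deleteEdges_adj]

lemma kne_dist (hn : 4 ≤ n) (hxy : x ≠ y) (u v : Fin n) :
    ((⊤ : SimpleGraph (Fin n)).deleteEdges {s(x, y)}).dist u v
      = if u = v then 0 else if s(u, v) = s(x, y) then 2 else 1 := by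
  split_ifs with h1 h2
  · subst h1; exact SimpleGraph.dist_self
  · obtain ⟨z, hz⟩ : ∃ z : Fin n, z ≠ u ∧ z ≠ v := by
      have hne : (({u, v} : Finset (Fin n))ᶜ).Nonempty := by
        rw [← Finset.card_pos, Finset.card_compl]
        have := Finset.card_insert_le u ({v} : Finset (Fin n))
        simp only [Finset.card_singleton, Fintype.card_fin] at this ⊢
        omega
      obtain ⟨z, hz⟩ := hne
      simp only [Finset.mem_compl, Finset.mem_insert, Finset.mem_singleton, not_or] at hz
      exact ⟨z, hz⟩
    have hadj1 : ((⊤ : SimpleGraph (Fin n)).deleteEdges {s(x, y)}).Adj u z := by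
      rw [kne_adj]
      refine ⟨fun h => hz.1 h.symm, fun h => ?_⟩
      rw [← h2, Sym2.eq_iff] at h
      rcases h with ⟨-, h⟩ | ⟨h, -⟩
      · exact hz.2 h
      · exact h1 h
    have hadj2 : ((⊤ : SimpleGraph (Fin n)).deleteEdges {s(x, y)}).Adj z v := by
      rw [kne_adj]
      refine ⟨hz.2, fun h => ?_⟩
      rw [← h2, Sym2.eq_iff] at h
      rcases h with ⟨h, -⟩ | ⟨-, h⟩
      · exact hz.1 h
      · exact h1 h.symm
    set p : ((⊤ : SimpleGraph (Fin n)).deleteEdges {s(x, y)}).Walk u v :=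
      SimpleGraph.Walk.cons hadj1 (SimpleGraph.Walk.cons hadj2 SimpleGraph.Walk.nil) with hp
    have hle : ((⊤ : SimpleGraph (Fin n)).deleteEdges {s(x, y)}).dist u v ≤ 2 := by
      have := SimpleGraph.dist_le p
      simpa [hp] using this
    have h0 : ((⊤ : SimpleGraph (Fin n)).deleteEdges {s(x, y)}).dist u v ≠ 0 := by
      intro h
      exact h1 ((SimpleGraph.Reachable.dist_eq_zero_iff ⟨p⟩).1 h)
    have hone : ((⊤ : SimpleGraph (Fin n)).deleteEdges {s(x, y)}).dist u v ≠ 1 := by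
      intro h
      have := SimpleGraph.dist_eq_one_iff_adj.1 h
      rw [kne_adj] at this
      exact this.2 h2
    omega
  · exact SimpleGraph.dist_eq_one_iff_adj.2 ((kne_adj x y u v).2 ⟨h1, h2⟩)

end

section
variable {n : ℕ} (x y : Fin n)

lemma kne_sEcc (hn : 4 ≤ n) (hxy : x ≠ y) (S : Finset (Fin n)) (hS : S.Nonempty) (v : Fin n) :
    sEcc ((⊤ : SimpleGraph (Fin n)).deleteEdges {s(x, y)}) S v
      = if (v = x ∧ y ∈ S) ∨ (v = y ∧ x ∈ S) then 2 else if S = {v} then 0 else 1 := by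
  unfold sEcc
  split_ifs with h1 h2
  · refine le_antisymm (Finset.sup_le fun u hu => ?_) ?_
    · rw [kne_dist x y hn hxy]; split_ifs <;> omega
    · rcases h1 with ⟨hv, hy⟩ | ⟨hv, hx⟩
      · have h2' : ((⊤ : SimpleGraph (Fin n)).deleteEdges {s(x, y)}).dist v y ≤
            S.sup fun u => ((⊤ : SimpleGraph (Fin n)).deleteEdges {s(x, y)}).dist v u :=
          Finset.le_sup hy
        rw [hv]
        rwa [hv, kne_dist x y hn hxy, if_neg hxy, if_pos rfl] at h2'
      · have h2' : ((⊤ : SimpleGraph (Fin n)).deleteEdges {s(x, y)}).dist v x ≤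
            S.sup fun u => ((⊤ : SimpleGraph (Fin n)).deleteEdges {s(x, y)}).dist v u :=
          Finset.le_sup hx
        rw [hv]
        rwa [hv, kne_dist x y hn hxy, if_neg (Ne.symm hxy), if_pos Sym2.eq_swap] at h2'
  · subst h2
    rw [Finset.sup_singleton, kne_dist x y hn hxy, if_pos rfl]
  · obtain ⟨u, hu, huv⟩ : ∃ u ∈ S, u ≠ v := by
      by_contra h
      push_neg at h
      obtain ⟨a, ha⟩ := hS
      exact h2 (Finset.eq_singleton_iff_unique_mem.2 ⟨(h a ha) ▸ ha, h⟩)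
    refine le_antisymm (Finset.sup_le fun w hw => ?_) ?_
    · rw [kne_dist x y hn hxy]
      split_ifs with e1 e2
      · omega
      · exfalso
        rw [Sym2.eq_iff] at e2
        rcases e2 with ⟨hv, hwy⟩ | ⟨hv, hwx⟩
        · exact h1 (Or.inl ⟨hv, hwy ▸ hw⟩)
        · exact h1 (Or.inr ⟨hv, hwx ▸ hw⟩)
      · omega
    · have h2' : ((⊤ : SimpleGraph (Fin n)).deleteEdges {s(x, y)}).dist v u ≤
          S.sup fun w => ((⊤ : SimpleGraph (Fin n)).deleteEdges {s(x, y)}).dist v w :=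
        Finset.le_sup hu
      rw [kne_dist x y hn hxy, if_neg (Ne.symm huv)] at h2'
      split_ifs at h2' with e2
      · rw [Sym2.eq_iff] at e2
        exfalso
        rcases e2 with ⟨hv, hwy⟩ | ⟨hv, hwx⟩
        · exact h1 (Or.inl ⟨hv, hwy ▸ hu⟩)
        · exact h1 (Or.inr ⟨hv, hwx ▸ hu⟩)
      · exact h2'

lemma kne_center_singleton (hn : 4 ≤ n) (hxy : x ≠ y) (v : Fin n) :
    sCenter ((⊤ : SimpleGraph (Fin n)).deleteEdges {s(x, y)}) {v} = {v} := by
  have hv0 : sEcc ((⊤ : SimpleGraph (Fin n)).deleteEdges {s(x, y)}) {v} v = 0 := by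
    rw [kne_sEcc x y hn hxy _ (Finset.singleton_nonempty v), if_neg, if_pos rfl]
    rintro (⟨h1, h2⟩ | ⟨h1, h2⟩) <;> simp_all
  ext w
  simp only [sCenter, Set.mem_setOf_eq, Set.mem_singleton_iff]
  constructor
  · intro hw
    have := hw v
    rw [hv0, Nat.le_zero] at this
    rw [kne_sEcc x y hn hxy _ (Finset.singleton_nonempty v)] at this
    split_ifs at this with e1 e2
    · rwa [Finset.singleton_inj, eq_comm] at e2
  · rintro rfl
    intro w; rw [hv0]; omega

lemma kne_center_big (hn : 4 ≤ n) (hxy : x ≠ y) (S : Finset (Fin n)) (hS : S.Nonempty)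
    (h2 : ∀ v, S ≠ {v}) :
    sCenter ((⊤ : SimpleGraph (Fin n)).deleteEdges {s(x, y)}) S
      = {v | ¬((v = x ∧ y ∈ S) ∨ (v = y ∧ x ∈ S))} := by
  obtain ⟨z, hzx, hzy⟩ : ∃ z : Fin n, z ≠ x ∧ z ≠ y := by
    have hne : (({x, y} : Finset (Fin n))ᶜ).Nonempty := by
      rw [← Finset.card_pos, Finset.card_compl]
      have := Finset.card_insert_le x ({y} : Finset (Fin n))
      simp only [Finset.card_singleton, Fintype.card_fin] at this ⊢
      omega
    obtain ⟨z, hz⟩ := hne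
    simp only [Finset.mem_compl, Finset.mem_insert, Finset.mem_singleton, not_or] at hz
    exact ⟨z, hz⟩
  have hz1 : sEcc ((⊤ : SimpleGraph (Fin n)).deleteEdges {s(x, y)}) S z = 1 := by
    rw [kne_sEcc x y hn hxy _ hS, if_neg, if_neg (h2 z)]
    rintro (⟨h, -⟩ | ⟨h, -⟩)
    exacts [hzx h, hzy h]
  ext v
  simp only [sCenter, Set.mem_setOf_eq]
  constructor
  · intro hv hc
    have := hv z
    rw [hz1, kne_sEcc x y hn hxy _ hS, if_pos hc] at this
    omega
  · intro hv w
    rw [kne_sEcc x y hn hxy _ hS, if_neg hv, if_neg (h2 v),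
        kne_sEcc x y hn hxy _ hS]
    split_ifs with hc hw
    · omega
    · exact absurd hw (h2 w)
    · omega

end

section
variable {n : ℕ} (x y : Fin n)

lemma kne_exists_two (hn : 4 ≤ n) :
    ∃ z w : Fin n, z ≠ w ∧ z ≠ x ∧ z ≠ y ∧ w ≠ x ∧ w ≠ y := by
  have h : 1 < (({x, y} : Finset (Fin n))ᶜ).card := by
    rw [Finset.card_compl]
    have := Finset.card_insert_le x ({y} : Finset (Fin n))
    simp only [Finset.card_singleton, Fintype.card_fin] at this ⊢
    omega
  obtain ⟨z, hz, w, hw, hzw⟩ := Finset.one_lt_card.1 h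
  simp only [Finset.mem_compl, Finset.mem_insert, Finset.mem_singleton, not_or] at hz hw
  exact ⟨z, w, hzw, hz.1, hz.2, hw.1, hw.2⟩

lemma kne_pair_ne_singleton {a b : Fin n} (hab : a ≠ b) (v : Fin n) :
    ({a, b} : Finset (Fin n)) ≠ {v} := by
  intro h
  have ha : a ∈ ({v} : Finset (Fin n)) := h ▸ Finset.mem_insert_self a {b}
  have hb : b ∈ ({v} : Finset (Fin n)) := h ▸ Finset.mem_insert_of_mem (Finset.mem_singleton_self b)
  rw [Finset.mem_singleton] at ha hb
  exact hab (ha.trans hb.symm)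

end

theorem centerSets_of_completeMinusEdge (n : ℕ) (hn : 4 ≤ n) (x y : Fin n) (hxy : x ≠ y)
    (A : Set (Fin n)) :
    IsCenterSet ((⊤ : SimpleGraph (Fin n)).deleteEdges {s(x, y)}) A ↔
      (∃ v : Fin n, A = {v}) ∨
      A = Set.univ \ {x} ∨
      A = Set.univ \ {y} ∨
      A = Set.univ \ {x, y} ∨
      A = Set.univ := by
  constructor
  · rintro ⟨S, hS, rfl⟩
    by_cases hsing : ∃ v, S = {v}
    · obtain ⟨v, rfl⟩ := hsing
      exact Or.inl ⟨v, kne_center_singleton x y hn hxy v⟩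
    · push_neg at hsing
      rw [kne_center_big x y hn hxy S hS hsing]
      by_cases hx : x ∈ S <;> by_cases hy : y ∈ S
      · right; right; right; left
        ext v
        simp only [Set.mem_setOf_eq, Set.mem_diff, Set.mem_univ, Set.mem_insert_iff,
          Set.mem_singleton_iff, true_and]
        tauto
      · right; right; left
        ext v
        simp only [Set.mem_setOf_eq, Set.mem_diff, Set.mem_univ, Set.mem_singleton_iff, true_and]
        tauto
      · right; left
        ext v
        simp only [Set.mem_setOf_eq, Set.mem_diff, Set.mem_univ, Set.mem_singleton_iff, true_and]
        tauto
      · right; right; right; right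
        ext v
        simp only [Set.mem_setOf_eq, Set.mem_univ, iff_true]
        tauto
  · obtain ⟨z, w, hzw, hzx, hzy, hwx, hwy⟩ := kne_exists_two x y hn
    rintro (⟨v, rfl⟩ | rfl | rfl | rfl | rfl)
    · exact ⟨{v}, Finset.singleton_nonempty v, kne_center_singleton x y hn hxy v⟩
    · refine ⟨{y, z}, Finset.insert_nonempty _ _, ?_⟩
      rw [kne_center_big x y hn hxy _ (Finset.insert_nonempty _ _)
        (kne_pair_ne_singleton (Ne.symm hzy))]
      have hxS : x ∉ ({y, z} : Finset (Fin n)) := by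
        simp only [Finset.mem_insert, Finset.mem_singleton, not_or]
        exact ⟨hxy, Ne.symm hzx⟩
      have hyS : y ∈ ({y, z} : Finset (Fin n)) := Finset.mem_insert_self _ _
      ext v
      simp only [Set.mem_setOf_eq, Set.mem_diff, Set.mem_univ, Set.mem_singleton_iff, true_and]
      tauto
    · refine ⟨{x, z}, Finset.insert_nonempty _ _, ?_⟩
      rw [kne_center_big x y hn hxy _ (Finset.insert_nonempty _ _)
        (kne_pair_ne_singleton (Ne.symm hzx))]
      have hyS : y ∉ ({x, z} : Finset (Fin n)) := by
        simp only [Finset.mem_insert, Finset.mem_singleton, not_or]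
        exact ⟨Ne.symm hxy, Ne.symm hzy⟩
      have hxS : x ∈ ({x, z} : Finset (Fin n)) := Finset.mem_insert_self _ _
      ext v
      simp only [Set.mem_setOf_eq, Set.mem_diff, Set.mem_univ, Set.mem_singleton_iff, true_and]
      tauto
    · refine ⟨{x, y}, Finset.insert_nonempty _ _, ?_⟩
      rw [kne_center_big x y hn hxy _ (Finset.insert_nonempty _ _)
        (kne_pair_ne_singleton hxy)]
      have hyS : y ∈ ({x, y} : Finset (Fin n)) :=
        Finset.mem_insert_of_mem (Finset.mem_singleton_self y)
      have hxS : x ∈ ({x, y} : Finset (Fin n)) := Finset.mem_insert_self _ _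
      ext v
      simp only [Set.mem_setOf_eq, Set.mem_diff, Set.mem_univ, Set.mem_insert_iff,
        Set.mem_singleton_iff, true_and]
      tauto
    · refine ⟨{z, w}, Finset.insert_nonempty _ _, ?_⟩
      rw [kne_center_big x y hn hxy _ (Finset.insert_nonempty _ _)
        (kne_pair_ne_singleton hzw)]
      have hxS : x ∉ ({z, w} : Finset (Fin n)) := by
        simp only [Finset.mem_insert, Finset.mem_singleton, not_or]
        exact ⟨Ne.symm hzx, Ne.symm hwx⟩
      have hyS : y ∉ ({z, w} : Finset (Fin n)) := by
        simp only [Finset.mem_insert, Finset.mem_singleton, not_or]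
        exact ⟨Ne.symm hzy, Ne.symm hwy⟩
      ext v
      simp only [Set.mem_setOf_eq, Set.mem_univ, iff_true]
      tauto
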